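/- Cutset bound for the two-way deterministic IC: for any achievable rate tuple, R₁ + R̃₂ ≤ n + ñ. Formally, for random variables forming a length-N code with encoding functions X_{2i} = f(W₂, Ỹ₂^{i-1}) and X̃_{1i} = f̃(W̃₁, Y₁^{i-1}), where (W₁, W̃₂) is independent of (W₂, W̃₁), and the channel outputs satisfy H(Y_{1i} | X_{1i}, X_{2i}) = 0 with H(Y_{1i} | X_{2i}) ≤ n and H(Ỹ_{2i} | X̃_{1i}) ≤ ñ, one has I(W₁, W̃₂ ; Y₁^N, W̃₁, Ỹ₂^N, W₂) ≤ N(n + ñ). -/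

import Mathlib

open Finset

/-- Probability mass of a value of a discrete random variable `X` under weights `p`. -/
noncomputable def pmass {Ω : Type} [Fintype Ω] (p : Ω → ℝ) {S : Type} [DecidableEq S]
    (X : Ω → S) (s : S) : ℝ :=
  ∑ ω, if X ω = s then p ω else 0

/-- Shannon entropy of a discrete random variable `X` on a finite alphabet. -/
noncomputable def ent {Ω : Type} [Fintype Ω] (p : Ω → ℝ) {S : Type} [Fintype S] [DecidableEq S]
    (X : Ω → S) : ℝ :=
  -∑ s, pmass p X s * Real.log (pmass p X s)

/-- Conditional entropy H(X | Z). -/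
noncomputable def condEnt {Ω : Type} [Fintype Ω] (p : Ω → ℝ) {S U : Type}
    [Fintype S] [DecidableEq S] [Fintype U] [DecidableEq U]
    (X : Ω → S) (Z : Ω → U) : ℝ :=
  ent p (fun ω => (X ω, Z ω)) - ent p Z

/-- Mutual information I(X;Y). -/
noncomputable def mutInfo {Ω : Type} [Fintype Ω] (p : Ω → ℝ) {S T : Type}
    [Fintype S] [DecidableEq S] [Fintype T] [DecidableEq T]
    (X : Ω → S) (Y : Ω → T) : ℝ :=
  ent p X + ent p Y - ent p (fun ω => (X ω, Y ω))

/-- Conditional mutual information I(X;Y|Z). -/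
noncomputable def condMutInfo {Ω : Type} [Fintype Ω] (p : Ω → ℝ) {S T U : Type}
    [Fintype S] [DecidableEq S] [Fintype T] [DecidableEq T] [Fintype U] [DecidableEq U]
    (X : Ω → S) (Y : Ω → T) (Z : Ω → U) : ℝ :=
  ent p (fun ω => (X ω, Z ω)) + ent p (fun ω => (Y ω, Z ω))
    - ent p (fun ω => (X ω, Y ω, Z ω)) - ent p Z

/-- Triple mutual information (interaction information) I(X;Y;Z) := I(X;Y) - I(X;Y|Z). -/
noncomputable def tripleInfo {Ω : Type} [Fintype Ω] (p : Ω → ℝ) {S T U : Type}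
    [Fintype S] [DecidableEq S] [Fintype T] [DecidableEq T] [Fintype U] [DecidableEq U]
    (X : Ω → S) (Y : Ω → T) (Z : Ω → U) : ℝ :=
  mutInfo p X Y - condMutInfo p X Y Z

section Base
variable {Ω : Type} [Fintype Ω] {p : Ω → ℝ}

lemma pmass_nonneg (hp0 : ∀ ω, 0 ≤ p ω) {S : Type} [DecidableEq S] (X : Ω → S) (s : S) :
    0 ≤ pmass p X s :=
  Finset.sum_nonneg fun ω _ => by split <;> simp [hp0 ω]

lemma sum_pmass {S : Type} [Fintype S] [DecidableEq S] (X : Ω → S) :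
    ∑ s, pmass p X s = ∑ ω, p ω := by
  unfold pmass
  rw [Finset.sum_comm]
  exact Finset.sum_congr rfl fun ω _ => by simp

lemma pmass_congr {S T : Type} [DecidableEq S] [DecidableEq T]
    {X : Ω → S} {Y : Ω → T} {s : S} {t : T} (h : ∀ ω, X ω = s ↔ Y ω = t) :
    pmass p X s = pmass p Y t :=
  Finset.sum_congr rfl fun ω _ => if_congr (h ω) rfl rfl

lemma sum_pmass_fst {S T : Type} [Fintype S] [DecidableEq S] [DecidableEq T]
    (X : Ω → S) (Y : Ω → T) (t : T) :
    ∑ s, pmass p (fun ω => (X ω, Y ω)) (s, t) = pmass p Y t := by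
  unfold pmass
  rw [Finset.sum_comm]
  refine Finset.sum_congr rfl fun ω _ => ?_
  by_cases h : Y ω = t <;> simp [Prod.ext_iff, h]

lemma sum_pmass_snd {S T : Type} [DecidableEq S] [Fintype T] [DecidableEq T]
    (X : Ω → S) (Y : Ω → T) (s : S) :
    ∑ t, pmass p (fun ω => (X ω, Y ω)) (s, t) = pmass p X s := by
  unfold pmass
  rw [Finset.sum_comm]
  refine Finset.sum_congr rfl fun ω _ => ?_
  by_cases h : X ω = s <;> simp [Prod.ext_iff, h]

lemma pmass_le_snd (hp0 : ∀ ω, 0 ≤ p ω) {S T : Type} [Fintype S] [DecidableEq S] [DecidableEq T]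
    (X : Ω → S) (Y : Ω → T) (s : S) (t : T) :
    pmass p (fun ω => (X ω, Y ω)) (s, t) ≤ pmass p Y t := by
  rw [← sum_pmass_fst X Y t]
  exact Finset.single_le_sum (fun s' _ => pmass_nonneg hp0 (fun ω => (X ω, Y ω)) (s', t)) (Finset.mem_univ s)

lemma ent_comp_inj {S T : Type} [Fintype S] [DecidableEq S] [Fintype T] [DecidableEq T]
    {g : S → T} (hg : Function.Injective g) (X : Ω → S) :
    ent p (fun ω => g (X ω)) = ent p X := by
  unfold ent
  congr 1
  have h0 : ∀ t ∈ (Finset.univ : Finset T), t ∉ Finset.univ.image g →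
      pmass p (fun ω => g (X ω)) t * Real.log (pmass p (fun ω => g (X ω)) t) = 0 := by
    intro t _ ht
    have : pmass p (fun ω => g (X ω)) t = 0 := by
      apply Finset.sum_eq_zero
      intro ω _
      rw [if_neg]
      intro h
      exact ht (Finset.mem_image.2 ⟨X ω, Finset.mem_univ _, h⟩)
    simp [this]
  rw [← Finset.sum_subset (Finset.subset_univ _) h0,
    Finset.sum_image (fun a _ b _ h => hg h)]
  refine Finset.sum_congr rfl fun s _ => ?_
  have : pmass p (fun ω => g (X ω)) (g s) = pmass p X s :=
    pmass_congr fun ω => hg.eq_iff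
  rw [this]

lemma ent_congr_comp {S T : Type} [Fintype S] [DecidableEq S] [Fintype T] [DecidableEq T]
    {g : S → T} (hg : Function.Injective g) {A : Ω → S} {B : Ω → T}
    (h : ∀ ω, B ω = g (A ω)) : ent p B = ent p A := by
  have hBA : B = fun ω => g (A ω) := funext h
  rw [hBA, ent_comp_inj hg]

lemma ent_pair_fn {S T : Type} [Fintype S] [DecidableEq S] [Fintype T] [DecidableEq T]
    {X : Ω → S} {Y : Ω → T} {g : S → T} (h : ∀ ω, Y ω = g (X ω)) :
    ent p (fun ω => (X ω, Y ω)) = ent p X :=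
  ent_congr_comp (g := fun s => (s, g s))
    (fun a b hab => congrArg Prod.fst hab) (fun ω => by rw [h ω])

lemma ent_snd_le (hp0 : ∀ ω, 0 ≤ p ω) {S T : Type} [Fintype S] [DecidableEq S]
    [Fintype T] [DecidableEq T] (X : Ω → S) (Y : Ω → T) :
    ent p Y ≤ ent p (fun ω => (X ω, Y ω)) := by
  unfold ent
  rw [neg_le_neg_iff]
  rw [Fintype.sum_prod_type, Finset.sum_comm]
  refine Finset.sum_le_sum fun t _ => ?_
  have hr : ∑ s, pmass p (fun ω => (X ω, Y ω)) (s, t) = pmass p Y t := sum_pmass_fst X Y t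
  calc ∑ s, pmass p (fun ω => (X ω, Y ω)) (s, t) *
          Real.log (pmass p (fun ω => (X ω, Y ω)) (s, t))
      ≤ ∑ s, pmass p (fun ω => (X ω, Y ω)) (s, t) * Real.log (pmass p Y t) := by
        refine Finset.sum_le_sum fun s _ => ?_
        rcases eq_or_lt_of_le (pmass_nonneg hp0 (fun ω => (X ω, Y ω)) (s, t)) with h0 | h0
        · simp [← h0]
        · refine mul_le_mul_of_nonneg_left ?_ h0.le
          exact Real.log_le_log h0 (pmass_le_snd hp0 X Y s t)
    _ = pmass p Y t * Real.log (pmass p Y t) := by rw [← Finset.sum_mul, hr]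
end Base

section Gibbs
variable {Ω : Type} [Fintype Ω] {p : Ω → ℝ}

lemma sum_rot {α β γ : Type*} [Fintype α] [Fintype β] [Fintype γ] (f : α → β → γ → ℝ) :
    ∑ a, ∑ b, ∑ c, f a b c = ∑ c, ∑ a, ∑ b, f a b c :=
  (Finset.sum_congr rfl fun _ _ => Finset.sum_comm).trans Finset.sum_comm

lemma condMutInfo_nonneg (hp0 : ∀ ω, 0 ≤ p ω) (hp1 : ∑ ω, p ω = 1)
    {S T U : Type} [Fintype S] [DecidableEq S] [Fintype T] [DecidableEq T]
    [Fintype U] [DecidableEq U] (X : Ω → S) (Y : Ω → T) (Z : Ω → U) :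
    0 ≤ condMutInfo p X Y Z := by
  unfold condMutInfo ent
  set a : S × T × U → ℝ := pmass p (fun ω => (X ω, Y ω, Z ω)) with ha
  set qXZ : S × U → ℝ := pmass p (fun ω => (X ω, Z ω)) with hqXZ
  set qYZ : T × U → ℝ := pmass p (fun ω => (Y ω, Z ω)) with hqYZ
  set qZ : U → ℝ := pmass p Z with hqZ
  have hqXZ0 : ∀ j, 0 ≤ qXZ j := fun j => pmass_nonneg hp0 _ j
  have hqYZ0 : ∀ j, 0 ≤ qYZ j := fun j => pmass_nonneg hp0 _ j
  have hqZ0 : ∀ u, 0 ≤ qZ u := fun u => pmass_nonneg hp0 _ u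
  have ha0 : ∀ i, 0 ≤ a i := fun i => pmass_nonneg hp0 _ i
  -- marginals
  have m1 : ∀ tu : T × U, ∑ s, a (s, tu) = qYZ tu := fun tu =>
    sum_pmass_fst X (fun ω => (Y ω, Z ω)) tu
  have m2 : ∀ (s : S) (u : U), ∑ t, a (s, t, u) = qXZ (s, u) := by
    intro s u
    rw [ha, hqXZ]
    unfold pmass
    rw [Finset.sum_comm]
    refine Finset.sum_congr rfl fun ω _ => ?_
    by_cases h1 : X ω = s <;> by_cases h2 : Z ω = u <;> simp [Prod.ext_iff, h1, h2]
  have m3 : ∀ u : U, ∑ s, ∑ t, a (s, t, u) = qZ u := by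
    intro u
    have : ∀ s : S, ∑ t, a (s, t, u) = qXZ (s, u) := fun s => m2 s u
    rw [Finset.sum_congr rfl fun s _ => this s]
    exact sum_pmass_fst X Z u
  -- the three marginal-sum identities
  have hS2 : ∑ i : S × T × U, a i * Real.log (qXZ (i.1, i.2.2))
      = ∑ j : S × U, qXZ j * Real.log (qXZ j) := by
    simp only [Fintype.sum_prod_type]
    refine Finset.sum_congr rfl fun s _ => ?_
    rw [Finset.sum_comm]
    refine Finset.sum_congr rfl fun u _ => ?_
    rw [← Finset.sum_mul, m2 s u]
  have hS3 : ∑ i : S × T × U, a i * Real.log (qYZ i.2)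
      = ∑ j : T × U, qYZ j * Real.log (qYZ j) := by
    rw [Fintype.sum_prod_type, Finset.sum_comm]
    refine Finset.sum_congr rfl fun tu _ => ?_
    dsimp only
    rw [← Finset.sum_mul, m1 tu]
  have hS4 : ∑ i : S × T × U, a i * Real.log (qZ i.2.2)
      = ∑ u : U, qZ u * Real.log (qZ u) := by
    simp only [Fintype.sum_prod_type]
    rw [show (∑ s : S, ∑ t : T, ∑ u : U, a (s, t, u) * Real.log (qZ u))
        = ∑ u : U, ∑ s : S, ∑ t : T, a (s, t, u) * Real.log (qZ u) from ?_]
    · refine Finset.sum_congr rfl fun u _ => ?_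
      have : ∑ s : S, ∑ t : T, a (s, t, u) * Real.log (qZ u)
          = (∑ s : S, ∑ t : T, a (s, t, u)) * Real.log (qZ u) := by
        rw [Finset.sum_mul]
        exact Finset.sum_congr rfl fun s _ => by rw [Finset.sum_mul]
      rw [this, m3 u]
    · exact sum_rot _
  -- Gibbs
  set b : S × T × U → ℝ := fun i =>
    if qZ i.2.2 = 0 then 0 else qXZ (i.1, i.2.2) * qYZ i.2 / qZ i.2.2 with hb
  have hb0 : ∀ i, 0 ≤ b i := by
    intro i
    rw [hb]
    dsimp only
    split
    · exact le_refl 0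
    · exact div_nonneg (mul_nonneg (hqXZ0 _) (hqYZ0 _)) (hqZ0 _)
  have hterm : ∀ i : S × T × U,
      a i * (Real.log (qXZ (i.1, i.2.2)) + Real.log (qYZ i.2)
        - Real.log (qZ i.2.2) - Real.log (a i)) ≤ b i - a i := by
    rintro ⟨s, t, u⟩
    rcases eq_or_lt_of_le (ha0 (s, t, u)) with h0 | h0
    · rw [← h0]
      simpa using hb0 (s, t, u)
    · have haXZ : a (s, t, u) ≤ qXZ (s, u) := by
        rw [← m2 s u]
        exact Finset.single_le_sum (fun t' _ => ha0 (s, t', u)) (Finset.mem_univ t)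
      have haYZ : a (s, t, u) ≤ qYZ (t, u) := by
        rw [← m1 (t, u)]
        exact Finset.single_le_sum (fun s' _ => ha0 (s', t, u)) (Finset.mem_univ s)
      have hYZZ : qYZ (t, u) ≤ qZ u := pmass_le_snd hp0 Y Z t u
      have hXZpos : 0 < qXZ (s, u) := lt_of_lt_of_le h0 haXZ
      have hYZpos : 0 < qYZ (t, u) := lt_of_lt_of_le h0 haYZ
      have hZpos : 0 < qZ u := lt_of_lt_of_le hYZpos hYZZ
      have hbval : b (s, t, u) = qXZ (s, u) * qYZ (t, u) / qZ u := by
        rw [hb]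
        exact if_neg (ne_of_gt hZpos)
      have hbpos : 0 < b (s, t, u) := by
        rw [hbval]
        exact div_pos (mul_pos hXZpos hYZpos) hZpos
      have hlog : Real.log (qXZ (s, u)) + Real.log (qYZ (t, u))
          - Real.log (qZ u) - Real.log (a (s, t, u))
          = Real.log (b (s, t, u) / a (s, t, u)) := by
        rw [Real.log_div (ne_of_gt hbpos) (ne_of_gt h0), hbval,
          Real.log_div (ne_of_gt (mul_pos hXZpos hYZpos)) (ne_of_gt hZpos),
          Real.log_mul (ne_of_gt hXZpos) (ne_of_gt hYZpos)]
        try ring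
      show a (s, t, u) * (Real.log (qXZ (s, u)) + Real.log (qYZ (t, u))
          - Real.log (qZ u) - Real.log (a (s, t, u))) ≤ b (s, t, u) - a (s, t, u)
      rw [hlog]
      calc a (s, t, u) * Real.log (b (s, t, u) / a (s, t, u))
          ≤ a (s, t, u) * (b (s, t, u) / a (s, t, u) - 1) :=
            mul_le_mul_of_nonneg_left
              (Real.log_le_sub_one_of_pos (div_pos hbpos h0)) h0.le
        _ = b (s, t, u) - a (s, t, u) := by
            rw [mul_sub, mul_one, mul_div_cancel₀ _ (ne_of_gt h0)]
  have hsumb : ∑ i : S × T × U, b i = ∑ u : U, qZ u := by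
    simp only [Fintype.sum_prod_type, hb]
    rw [show (∑ s : S, ∑ t : T, ∑ u : U,
        (if qZ u = 0 then 0 else qXZ (s, u) * qYZ (t, u) / qZ u))
        = ∑ u : U, ∑ s : S, ∑ t : T,
        (if qZ u = 0 then 0 else qXZ (s, u) * qYZ (t, u) / qZ u) from ?_]
    · refine Finset.sum_congr rfl fun u _ => ?_
      by_cases h : qZ u = 0
      · simp [h]
      · simp only [if_neg h]
        have h1 : ∀ s : S, ∑ t : T, qXZ (s, u) * qYZ (t, u) / qZ u = qXZ (s, u) := by
          intro s
          rw [← Finset.sum_div, ← Finset.mul_sum, sum_pmass_fst Y Z u, mul_div_assoc,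
            div_self h, mul_one]
        rw [Finset.sum_congr rfl fun s _ => h1 s, sum_pmass_fst X Z u]
    · exact sum_rot _
  have hsuma : ∑ i : S × T × U, a i = 1 := by rw [ha, sum_pmass, hp1]
  have hsumqZ : ∑ u : U, qZ u = 1 := by rw [hqZ, sum_pmass, hp1]
  have key : ∑ i : S × T × U,
      a i * (Real.log (qXZ (i.1, i.2.2)) + Real.log (qYZ i.2)
        - Real.log (qZ i.2.2) - Real.log (a i)) ≤ 0 := by
    calc ∑ i : S × T × U, a i * (Real.log (qXZ (i.1, i.2.2)) + Real.log (qYZ i.2)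
        - Real.log (qZ i.2.2) - Real.log (a i))
        ≤ ∑ i : S × T × U, (b i - a i) := Finset.sum_le_sum fun i _ => hterm i
      _ = (∑ i, b i) - ∑ i, a i := Finset.sum_sub_distrib _ _
      _ = 0 := by rw [hsumb, hsuma, hsumqZ]; ring
  have expand : ∀ i : S × T × U,
      a i * (Real.log (qXZ (i.1, i.2.2)) + Real.log (qYZ i.2)
        - Real.log (qZ i.2.2) - Real.log (a i))
      = a i * Real.log (qXZ (i.1, i.2.2)) + a i * Real.log (qYZ i.2)
        - a i * Real.log (qZ i.2.2) - a i * Real.log (a i) := fun i => by ring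
  rw [Finset.sum_congr rfl fun i _ => expand i] at key
  rw [Finset.sum_sub_distrib, Finset.sum_sub_distrib, Finset.sum_add_distrib,
    hS2, hS3, hS4] at key
  linarith [key]

lemma ent_indep (hp1 : ∑ ω, p ω = 1)
    {S T : Type} [Fintype S] [DecidableEq S] [Fintype T] [DecidableEq T]
    (X : Ω → S) (Y : Ω → T)
    (h : ∀ s t, pmass p (fun ω => (X ω, Y ω)) (s, t) = pmass p X s * pmass p Y t) :
    ent p (fun ω => (X ω, Y ω)) = ent p X + ent p Y := by
  unfold ent
  have hX : ∑ s, pmass p X s = 1 := by rw [sum_pmass, hp1]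
  have hY : ∑ t, pmass p Y t = 1 := by rw [sum_pmass, hp1]
  rw [Fintype.sum_prod_type]
  have hterm : ∀ (s : S) (t : T),
      pmass p (fun ω => (X ω, Y ω)) (s, t) * Real.log (pmass p (fun ω => (X ω, Y ω)) (s, t))
      = (pmass p X s * Real.log (pmass p X s)) * pmass p Y t
        + pmass p X s * (pmass p Y t * Real.log (pmass p Y t)) := by
    intro s t
    rw [h s t]
    by_cases hq : pmass p X s = 0
    · simp [hq]
    · by_cases hr : pmass p Y t = 0
      · simp [hr]
      · rw [Real.log_mul hq hr]; ring
  rw [Finset.sum_congr rfl fun s _ => Finset.sum_congr rfl fun t _ => hterm s t]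
  have : ∀ s : S, ∑ t, ((pmass p X s * Real.log (pmass p X s)) * pmass p Y t
      + pmass p X s * (pmass p Y t * Real.log (pmass p Y t)))
      = pmass p X s * Real.log (pmass p X s)
        + pmass p X s * (∑ t, pmass p Y t * Real.log (pmass p Y t)) := by
    intro s
    rw [Finset.sum_add_distrib, ← Finset.mul_sum, hY, mul_one, ← Finset.mul_sum]
  rw [Finset.sum_congr rfl fun s _ => this s, Finset.sum_add_distrib,
    ← Finset.sum_mul, hX, one_mul]
  ring
end Gibbs

section Derived
variable {Ω : Type} [Fintype Ω] {p : Ω → ℝ}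

lemma condEnt_comp_fn {S T U' : Type} [Fintype S] [DecidableEq S] [Fintype T] [DecidableEq T]
    [Fintype U'] [DecidableEq U'] {g : S → T} (hg : Function.Injective g)
    {A : Ω → S} {B : Ω → T} (h : ∀ ω, B ω = g (A ω)) (Z : Ω → U') :
    condEnt p B Z = condEnt p A Z := by
  unfold condEnt
  rw [ent_congr_comp (g := fun x : S × U' => (g x.1, x.2))
    (by rintro ⟨x1, x2⟩ ⟨y1, y2⟩ hxy
        simp only [Prod.mk.injEq] at hxy ⊢
        exact ⟨hg hxy.1, hxy.2⟩)
    (A := fun ω => (A ω, Z ω)) (fun ω => by rw [h ω])]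

lemma condEnt_of_fn {S U' : Type} [Fintype S] [DecidableEq S] [Fintype U'] [DecidableEq U']
    {X : Ω → S} {Z : Ω → U'} {g : U' → S} (h : ∀ ω, X ω = g (Z ω)) :
    condEnt p X Z = 0 := by
  unfold condEnt
  rw [ent_congr_comp (g := fun z => (g z, z))
    (fun a b hab => congrArg Prod.snd hab) (A := Z) (fun ω => by rw [h ω])]
  exact sub_self _

lemma condEnt_cond_fn {S T' U' : Type} [Fintype S] [DecidableEq S] [Fintype T'] [DecidableEq T']
    [Fintype U'] [DecidableEq U'] {T : Ω → T'} {Z : Ω → U'} {g : U' → T'}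
    (h : ∀ ω, T ω = g (Z ω)) (X : Ω → S) :
    condEnt p X (fun ω => (T ω, Z ω)) = condEnt p X Z := by
  unfold condEnt
  have e1 : ent p (fun ω => (X ω, (T ω, Z ω))) = ent p (fun ω => (X ω, Z ω)) :=
    ent_congr_comp (g := fun x : S × U' => (x.1, (g x.2, x.2)))
      (by rintro ⟨x1, x2⟩ ⟨y1, y2⟩ hxy
          simp only [Prod.mk.injEq] at hxy ⊢
          exact ⟨hxy.1, hxy.2.2⟩)
      (fun ω => by rw [h ω])
  have e2 : ent p (fun ω => (T ω, Z ω)) = ent p Z :=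
    ent_congr_comp (g := fun z => (g z, z))
      (fun a b hab => congrArg Prod.snd hab) (fun ω => by rw [h ω])
  rw [e1, e2]

lemma condEnt_drop (hp0 : ∀ ω, 0 ≤ p ω) (hp1 : ∑ ω, p ω = 1)
    {S T' U' : Type} [Fintype S] [DecidableEq S] [Fintype T'] [DecidableEq T']
    [Fintype U'] [DecidableEq U'] (X : Ω → S) (T : Ω → T') (Z : Ω → U') :
    condEnt p X (fun ω => (T ω, Z ω)) ≤ condEnt p X T := by
  have h0 := condMutInfo_nonneg hp0 hp1 X Z T
  have e1 : ent p (fun ω => (X ω, (T ω, Z ω))) = ent p (fun ω => (X ω, Z ω, T ω)) :=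
    ent_congr_comp (g := fun x : S × U' × T' => (x.1, (x.2.2, x.2.1)))
      (by rintro ⟨x1, x2, x3⟩ ⟨y1, y2, y3⟩ hxy
          simp only [Prod.mk.injEq] at hxy ⊢
          tauto)
      (fun ω => rfl)
  have e2 : ent p (fun ω => (T ω, Z ω)) = ent p (fun ω => (Z ω, T ω)) :=
    ent_congr_comp (g := fun x : U' × T' => (x.2, x.1))
      (by rintro ⟨x1, x2⟩ ⟨y1, y2⟩ hxy
          simp only [Prod.mk.injEq] at hxy ⊢
          tauto)
      (fun ω => rfl)
  unfold condMutInfo at h0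
  unfold condEnt
  linarith

lemma condEnt_pair_le (hp0 : ∀ ω, 0 ≤ p ω) (hp1 : ∑ ω, p ω = 1)
    {S T U' : Type} [Fintype S] [DecidableEq S] [Fintype T] [DecidableEq T]
    [Fintype U'] [DecidableEq U'] (X : Ω → S) (Y : Ω → T) (Z : Ω → U') :
    condEnt p (fun ω => (X ω, Y ω)) Z ≤ condEnt p X Z + condEnt p Y Z := by
  have h0 := condMutInfo_nonneg hp0 hp1 X Y Z
  have e1 : ent p (fun ω => ((X ω, Y ω), Z ω)) = ent p (fun ω => (X ω, Y ω, Z ω)) :=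
    ent_congr_comp (g := fun x : S × T × U' => ((x.1, x.2.1), x.2.2))
      (by rintro ⟨x1, x2, x3⟩ ⟨y1, y2, y3⟩ hxy
          simp only [Prod.mk.injEq] at hxy ⊢
          tauto)
      (fun ω => rfl)
  unfold condMutInfo at h0
  unfold condEnt
  linarith

lemma condEnt_chain {S T U' : Type} [Fintype S] [DecidableEq S] [Fintype T] [DecidableEq T]
    [Fintype U'] [DecidableEq U'] (Xa : Ω → S) (Xb : Ω → T) (Z : Ω → U') :
    condEnt p (fun ω => (Xa ω, Xb ω)) Z
      = condEnt p Xa Z + condEnt p Xb (fun ω => (Xa ω, Z ω)) := by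
  have e1 : ent p (fun ω => (Xb ω, (Xa ω, Z ω))) = ent p (fun ω => ((Xa ω, Xb ω), Z ω)) :=
    ent_congr_comp (g := fun x : (S × T) × U' => (x.1.2, (x.1.1, x.2)))
      (by rintro ⟨⟨x1, x2⟩, x3⟩ ⟨⟨y1, y2⟩, y3⟩ hxy
          simp only [Prod.mk.injEq] at hxy ⊢
          tauto)
      (fun ω => rfl)
  unfold condEnt
  linarith

lemma condMutInfo_le_condEnt (hp0 : ∀ ω, 0 ≤ p ω)
    {S T U' : Type} [Fintype S] [DecidableEq S] [Fintype T] [DecidableEq T]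
    [Fintype U'] [DecidableEq U'] (X : Ω → S) (Y : Ω → T) (Z : Ω → U') :
    condMutInfo p X Y Z ≤ condEnt p Y Z := by
  have e1 : ent p (fun ω => (X ω, Y ω, Z ω)) = ent p (fun ω => (Y ω, (X ω, Z ω))) :=
    (ent_congr_comp (g := fun x : S × T × U' => (x.2.1, (x.1, x.2.2)))
      (B := fun ω => (Y ω, (X ω, Z ω))) (A := fun ω => (X ω, Y ω, Z ω))
      (by rintro ⟨x1, x2, x3⟩ ⟨y1, y2, y3⟩ hxy
          simp only [Prod.mk.injEq] at hxy ⊢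
          tauto)
      (fun ω => rfl)).symm
  have h2 : ent p (fun ω => (X ω, Z ω)) ≤ ent p (fun ω => (Y ω, (X ω, Z ω))) :=
    ent_snd_le hp0 Y (fun ω => (X ω, Z ω))
  unfold condMutInfo condEnt
  linarith

lemma mutInfo_comp {S T T' : Type} [Fintype S] [DecidableEq S] [Fintype T] [DecidableEq T]
    [Fintype T'] [DecidableEq T'] {e : T → T'} (he : Function.Injective e)
    (X : Ω → S) (Y : Ω → T) :
    mutInfo p X (fun ω => e (Y ω)) = mutInfo p X Y := by
  unfold mutInfo
  rw [ent_comp_inj he, ent_congr_comp (g := fun x : S × T => (x.1, e x.2))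
    (by rintro ⟨x1, x2⟩ ⟨y1, y2⟩ hxy
        simp only [Prod.mk.injEq] at hxy ⊢
        exact ⟨hxy.1, he hxy.2⟩)
    (A := fun ω => (X ω, Y ω)) (fun ω => rfl)]

lemma mutInfo_pair_decomp {S T U' : Type} [Fintype S] [DecidableEq S] [Fintype T] [DecidableEq T]
    [Fintype U'] [DecidableEq U'] (X : Ω → S) (Y : Ω → T) (Z : Ω → U') :
    mutInfo p X (fun ω => (Y ω, Z ω)) = mutInfo p X Z + condMutInfo p X Y Z := by
  simp only [mutInfo, condMutInfo]
  ring

lemma mutInfo_indep (hp1 : ∑ ω, p ω = 1)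
    {S T : Type} [Fintype S] [DecidableEq S] [Fintype T] [DecidableEq T]
    {X : Ω → S} {Y : Ω → T}
    (h : ∀ s t, pmass p (fun ω => (X ω, Y ω)) (s, t) = pmass p X s * pmass p Y t) :
    mutInfo p X Y = 0 := by
  unfold mutInfo
  rw [ent_indep hp1 X Y h]
  ring

lemma pair_step (hp0 : ∀ ω, 0 ≤ p ω) (hp1 : ∑ ω, p ω = 1) {n nt : ℝ}
    {E' F' G : Type} [Fintype E'] [DecidableEq E'] [Fintype F'] [DecidableEq F']
    [Fintype G] [DecidableEq G]
    (Ya Yb : Ω → E') (Xa Xb : Ω → F') (Cc : Ω → G)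
    {ga gb : G → F'} (ha : ∀ ω, Xa ω = ga (Cc ω)) (hb : ∀ ω, Xb ω = gb (Cc ω))
    (hna : condEnt p Ya Xa ≤ n) (hnb : condEnt p Yb Xb ≤ nt) :
    condEnt p (fun ω => (Ya ω, Yb ω)) Cc ≤ n + nt := by
  have h1 : condEnt p (fun ω => (Ya ω, Yb ω)) Cc ≤ condEnt p Ya Cc + condEnt p Yb Cc :=
    condEnt_pair_le hp0 hp1 Ya Yb Cc
  have h2a : condEnt p Ya Cc = condEnt p Ya (fun ω => (Xa ω, Cc ω)) :=
    (condEnt_cond_fn ha Ya).symm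
  have h2b : condEnt p Yb Cc = condEnt p Yb (fun ω => (Xb ω, Cc ω)) :=
    (condEnt_cond_fn hb Yb).symm
  have h3a : condEnt p Ya (fun ω => (Xa ω, Cc ω)) ≤ condEnt p Ya Xa :=
    condEnt_drop hp0 hp1 Ya Xa Cc
  have h3b : condEnt p Yb (fun ω => (Xb ω, Cc ω)) ≤ condEnt p Yb Xb :=
    condEnt_drop hp0 hp1 Yb Xb Cc
  linarith
end Derived

/-- cutset bound for the two-way deterministic IC:
I(W₁, W̃₂ ; Y₁ᴺ, W̃₁, Ỹ₂ᴺ, W₂) ≤ N(n + ñ). -/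
theorem cutset_bound {Ω : Type} [Fintype Ω] (p : Ω → ℝ)
    (hp0 : ∀ ω, 0 ≤ p ω) (hp1 : ∑ ω, p ω = 1)
    (N : ℕ) (n nt : ℝ) (hn : 0 ≤ n) (hnt : 0 ≤ nt)
    {A B C D E F : Type}
    [Fintype A] [DecidableEq A] [Fintype B] [DecidableEq B]
    [Fintype C] [DecidableEq C] [Fintype D] [DecidableEq D]
    [Fintype E] [DecidableEq E] [Fintype F] [DecidableEq F]
    (W1 : Ω → A) (W2 : Ω → B) (tW1 : Ω → C) (tW2 : Ω → D)
    (Y1 Y2 tY1 tY2 : Fin N → Ω → E)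
    (X1 X2 tX1 tX2 : Fin N → Ω → F)
    -- the four messages are mutually independent
    (hindep : ∀ a b c d,
      pmass p (fun ω => (W1 ω, W2 ω, tW1 ω, tW2 ω)) (a, b, c, d)
        = pmass p W1 a * pmass p W2 b * pmass p tW1 c * pmass p tW2 d)
    -- encoders: Xₖᵢ is a function of (Wₖ, Ỹₖ^{i-1}); X̃ₖᵢ of (W̃ₖ, Yₖ^{i-1})
    (hX1 : ∀ i : Fin N, ∃ f : A → ((j : Fin N) → j < i → E) → F,
      ∀ ω, X1 i ω = f (W1 ω) (fun j _ => tY1 j ω))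
    (hX2 : ∀ i : Fin N, ∃ f : B → ((j : Fin N) → j < i → E) → F,
      ∀ ω, X2 i ω = f (W2 ω) (fun j _ => tY2 j ω))
    (htX1 : ∀ i : Fin N, ∃ f : C → ((j : Fin N) → j < i → E) → F,
      ∀ ω, tX1 i ω = f (tW1 ω) (fun j _ => Y1 j ω))
    (htX2 : ∀ i : Fin N, ∃ f : D → ((j : Fin N) → j < i → E) → F,
      ∀ ω, tX2 i ω = f (tW2 ω) (fun j _ => Y2 j ω))
    -- channel: outputs are deterministic given the two inputs, with level bounds
    (hY1det : ∀ i, condEnt p (Y1 i) (fun ω => (X1 i ω, X2 i ω)) = 0)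
    (hY1n : ∀ i, condEnt p (Y1 i) (X2 i) ≤ n)
    (htY2det : ∀ i, condEnt p (tY2 i) (fun ω => (tX1 i ω, tX2 i ω)) = 0)
    (htY2nt : ∀ i, condEnt p (tY2 i) (tX1 i) ≤ nt)
    -- Ỹ₂ᵢ is a deterministic function of the four messages
    (htY2msg : ∀ i : Fin N, ∃ f : A → B → C → D → E,
      ∀ ω, tY2 i ω = f (W1 ω) (W2 ω) (tW1 ω) (tW2 ω)) :
    mutInfo p (fun ω => (W1 ω, tW2 ω))
      (fun ω => ((fun i => Y1 i ω), tW1 ω, (fun i => tY2 i ω), W2 ω))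
      ≤ N * (n + nt) := by
  classical
  -- independence of (W1, tW2) and (tW1, W2)
  have hq1 : ∑ a : A, pmass p W1 a = 1 := by rw [sum_pmass, hp1]
  have hq2 : ∑ b : B, pmass p W2 b = 1 := by rw [sum_pmass, hp1]
  have hq3 : ∑ c : C, pmass p tW1 c = 1 := by rw [sum_pmass, hp1]
  have hq4 : ∑ d : D, pmass p tW2 d = 1 := by rw [sum_pmass, hp1]
  have hall : ∀ (a : A) (b : B) (c : C) (d : D),
      pmass p (fun ω => ((W1 ω, tW2 ω), (tW1 ω, W2 ω))) ((a, d), (c, b))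
        = pmass p W1 a * pmass p W2 b * pmass p tW1 c * pmass p tW2 d := by
    intro a b c d
    rw [← hindep a b c d]
    exact pmass_congr fun ω => by
      simp only [Prod.ext_iff]
      tauto
  have hfac : ∀ (u : A × D) (v : C × B),
      pmass p (fun ω => ((W1 ω, tW2 ω), (tW1 ω, W2 ω))) (u, v)
        = pmass p (fun ω => (W1 ω, tW2 ω)) u * pmass p (fun ω => (tW1 ω, W2 ω)) v := by
    rintro ⟨a, d⟩ ⟨c, b⟩
    have hU : pmass p (fun ω => (W1 ω, tW2 ω)) (a, d) = pmass p W1 a * pmass p tW2 d := by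
      rw [← sum_pmass_snd (fun ω => (W1 ω, tW2 ω)) (fun ω => (tW1 ω, W2 ω)) (a, d)]
      simp only [Fintype.sum_prod_type]
      rw [Finset.sum_congr rfl fun c' _ => Finset.sum_congr rfl fun b' _ => hall a b' c' d]
      have h5 : ∀ c' : C, ∑ b' : B,
          pmass p W1 a * pmass p W2 b' * pmass p tW1 c' * pmass p tW2 d
          = pmass p tW1 c' * (pmass p W1 a * pmass p tW2 d) := by
        intro c'
        have : ∀ b' : B, pmass p W1 a * pmass p W2 b' * pmass p tW1 c' * pmass p tW2 d
            = pmass p W2 b' * (pmass p tW1 c' * (pmass p W1 a * pmass p tW2 d)) := by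
          intro b'; ring
        rw [Finset.sum_congr rfl fun b' _ => this b', ← Finset.sum_mul, hq2, one_mul]
      rw [Finset.sum_congr rfl fun c' _ => h5 c', ← Finset.sum_mul, hq3, one_mul]
    have hM : pmass p (fun ω => (tW1 ω, W2 ω)) (c, b) = pmass p tW1 c * pmass p W2 b := by
      rw [← sum_pmass_fst (fun ω => (W1 ω, tW2 ω)) (fun ω => (tW1 ω, W2 ω)) (c, b)]
      simp only [Fintype.sum_prod_type]
      rw [Finset.sum_congr rfl fun a' _ => Finset.sum_congr rfl fun d' _ => hall a' b c d']
      have h5 : ∀ a' : A, ∑ d' : D,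
          pmass p W1 a' * pmass p W2 b * pmass p tW1 c * pmass p tW2 d'
          = pmass p W1 a' * (pmass p tW1 c * pmass p W2 b) := by
        intro a'
        have : ∀ d' : D, pmass p W1 a' * pmass p W2 b * pmass p tW1 c * pmass p tW2 d'
            = pmass p tW2 d' * (pmass p W1 a' * (pmass p tW1 c * pmass p W2 b)) := by
          intro d'; ring
        rw [Finset.sum_congr rfl fun d' _ => this d', ← Finset.sum_mul, hq4, one_mul]
      have h6 : ∀ a' : A, ∑ d' : D,
          pmass p W1 a' * pmass p W2 b * pmass p tW1 c * pmass p tW2 d'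
          = pmass p W1 a' * (pmass p tW1 c * pmass p W2 b) := h5
      rw [Finset.sum_congr rfl fun a' _ => h6 a', ← Finset.sum_mul, hq1, one_mul]
    rw [hall a b c d, hU, hM]
    ring
  have hI0 : mutInfo p (fun ω => (W1 ω, tW2 ω)) (fun ω => (tW1 ω, W2 ω)) = 0 :=
    mutInfo_indep hp1 hfac
  -- reshuffle the observed tuple
  have e_inj : Function.Injective
      (fun x : ((Fin N → E) × (Fin N → E)) × (C × B) => (x.1.1, x.2.1, x.1.2, x.2.2)) := by
    rintro ⟨⟨a1, a2⟩, a3, a4⟩ ⟨⟨b1, b2⟩, b3, b4⟩ hxy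
    simp only [Prod.mk.injEq] at hxy ⊢
    tauto
  have h1 : mutInfo p (fun ω => (W1 ω, tW2 ω))
      (fun ω => ((fun i => Y1 i ω), tW1 ω, (fun i => tY2 i ω), W2 ω))
      = mutInfo p (fun ω => (W1 ω, tW2 ω))
        (fun ω => (((fun i => Y1 i ω), (fun i => tY2 i ω)), (tW1 ω, W2 ω))) :=
    mutInfo_comp e_inj (fun ω => (W1 ω, tW2 ω))
      (fun ω => (((fun i => Y1 i ω), (fun i => tY2 i ω)), (tW1 ω, W2 ω)))
  have h2 : mutInfo p (fun ω => (W1 ω, tW2 ω))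
      (fun ω => (((fun i => Y1 i ω), (fun i => tY2 i ω)), (tW1 ω, W2 ω)))
      = mutInfo p (fun ω => (W1 ω, tW2 ω)) (fun ω => (tW1 ω, W2 ω))
        + condMutInfo p (fun ω => (W1 ω, tW2 ω))
          (fun ω => ((fun i => Y1 i ω), (fun i => tY2 i ω))) (fun ω => (tW1 ω, W2 ω)) :=
    mutInfo_pair_decomp (fun ω => (W1 ω, tW2 ω))
      (fun ω => ((fun i => Y1 i ω), (fun i => tY2 i ω))) (fun ω => (tW1 ω, W2 ω))
  have h3 : condMutInfo p (fun ω => (W1 ω, tW2 ω))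
      (fun ω => ((fun i => Y1 i ω), (fun i => tY2 i ω))) (fun ω => (tW1 ω, W2 ω))
      ≤ condEnt p (fun ω => ((fun i => Y1 i ω), (fun i => tY2 i ω)))
        (fun ω => (tW1 ω, W2 ω)) :=
    condMutInfo_le_condEnt hp0 _ _ _
  -- the inductive bound
  have main : ∀ k (hk : k ≤ N),
      condEnt p (fun ω => ((fun j : Fin k => Y1 (Fin.castLE hk j) ω),
        (fun j : Fin k => tY2 (Fin.castLE hk j) ω))) (fun ω => (tW1 ω, W2 ω))
        ≤ (k : ℝ) * (n + nt) := by
    intro k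
    induction k with
    | zero =>
      intro hk
      have hemp : ∀ f g : (Fin 0 → E) × (Fin 0 → E), f = g := by
        rintro ⟨f1, f2⟩ ⟨g1, g2⟩
        have e1 : f1 = g1 := funext fun j => j.elim0
        have e2 : f2 = g2 := funext fun j => j.elim0
        rw [e1, e2]
      have h0 : condEnt p (fun ω => ((fun j : Fin 0 => Y1 (Fin.castLE hk j) ω),
          (fun j : Fin 0 => tY2 (Fin.castLE hk j) ω))) (fun ω => (tW1 ω, W2 ω)) = 0 :=
        condEnt_of_fn (g := fun _ => ((fun j : Fin 0 => j.elim0), (fun j : Fin 0 => j.elim0)))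
          (fun ω => hemp _ _)
      rw [h0]
      simp
    | succ k ih =>
      intro hk
      have hk' : k ≤ N := Nat.le_of_succ_le hk
      have hkN : k < N := hk
      have stepA : condEnt p (fun ω => ((fun j : Fin (k+1) => Y1 (Fin.castLE hk j) ω),
            (fun j : Fin (k+1) => tY2 (Fin.castLE hk j) ω))) (fun ω => (tW1 ω, W2 ω))
          = condEnt p (fun ω => (((fun j : Fin k => Y1 (Fin.castLE hk' j) ω),
              (fun j : Fin k => tY2 (Fin.castLE hk' j) ω)),
              (Y1 ⟨k, hkN⟩ ω, tY2 ⟨k, hkN⟩ ω))) (fun ω => (tW1 ω, W2 ω)) := by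
        refine (condEnt_comp_fn (g := fun x : (Fin (k+1) → E) × (Fin (k+1) → E) =>
            (((fun j : Fin k => x.1 j.castSucc), (fun j : Fin k => x.2 j.castSucc)),
              (x.1 (Fin.last k), x.2 (Fin.last k)))) ?_ (fun ω => rfl) _).symm
        rintro ⟨x1, x2⟩ ⟨y1, y2⟩ hxy
        simp only [Prod.mk.injEq] at hxy ⊢
        obtain ⟨⟨ha1, ha2⟩, ha3, ha4⟩ := hxy
        constructor
        · funext j
          induction j using Fin.lastCases with
          | last => exact ha3
          | cast i => exact congrFun ha1 i
        · funext j
          induction j using Fin.lastCases with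
          | last => exact ha4
          | cast i => exact congrFun ha2 i
      have stepB : condEnt p (fun ω => (((fun j : Fin k => Y1 (Fin.castLE hk' j) ω),
            (fun j : Fin k => tY2 (Fin.castLE hk' j) ω)),
            (Y1 ⟨k, hkN⟩ ω, tY2 ⟨k, hkN⟩ ω))) (fun ω => (tW1 ω, W2 ω))
          = condEnt p (fun ω => ((fun j : Fin k => Y1 (Fin.castLE hk' j) ω),
              (fun j : Fin k => tY2 (Fin.castLE hk' j) ω))) (fun ω => (tW1 ω, W2 ω))
            + condEnt p (fun ω => (Y1 ⟨k, hkN⟩ ω, tY2 ⟨k, hkN⟩ ω))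
              (fun ω => (((fun j : Fin k => Y1 (Fin.castLE hk' j) ω),
                (fun j : Fin k => tY2 (Fin.castLE hk' j) ω)), (tW1 ω, W2 ω))) :=
        condEnt_chain _ _ _
      obtain ⟨f2, hf2⟩ := hX2 ⟨k, hkN⟩
      obtain ⟨f1, hf1⟩ := htX1 ⟨k, hkN⟩
      have stepC : condEnt p (fun ω => (Y1 ⟨k, hkN⟩ ω, tY2 ⟨k, hkN⟩ ω))
          (fun ω => (((fun j : Fin k => Y1 (Fin.castLE hk' j) ω),
            (fun j : Fin k => tY2 (Fin.castLE hk' j) ω)), (tW1 ω, W2 ω))) ≤ n + nt := by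
        refine pair_step hp0 hp1 (Y1 ⟨k, hkN⟩) (tY2 ⟨k, hkN⟩)
          (X2 ⟨k, hkN⟩) (tX1 ⟨k, hkN⟩) _
          (ga := fun x : ((Fin k → E) × (Fin k → E)) × (C × B) =>
            f2 x.2.2 (fun j hj => x.1.2 ⟨j.1, hj⟩))
          (gb := fun x : ((Fin k → E) × (Fin k → E)) × (C × B) =>
            f1 x.2.1 (fun j hj => x.1.1 ⟨j.1, hj⟩))
          (fun ω => hf2 ω) (fun ω => hf1 ω) (hY1n ⟨k, hkN⟩) (htY2nt ⟨k, hkN⟩)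
      have hih := ih hk'
      rw [stepA, stepB]
      push_cast
      linarith
  have h4 : condEnt p (fun ω => ((fun i => Y1 i ω), (fun i => tY2 i ω)))
      (fun ω => (tW1 ω, W2 ω)) ≤ (N : ℝ) * (n + nt) := main N le_rfl
  linarith
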